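/- Let D be an oriented graph (simple digraph with no digons) whose longest directed cycle has length s, where s ≥ 3. Then the list dichromatic number of D is at most s−1. -/

import Mathlib

/-- A directed cycle of length `n` in the digraph with arc relation `A`:
an injective map `f : ZMod n → V` with an arc from each vertex to the next. -/
def IsDicycle {V : Type*} (A : V → V → Prop) (n : ℕ) (f : ZMod n → V) : Prop :=
  0 < n ∧ Function.Injective f ∧ ∀ i, A (f i) (f (i + 1))

/-- A set of vertices is acyclic if it contains no directed cycle. -/
def AcyclicSet {V : Type*} (A : V → V → Prop) (S : Set V) : Prop :=
  ∀ (n : ℕ) (f : ZMod n → V), (∀ i, f i ∈ S) → ¬ IsDicycle A n f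

/-- The dichromatic number: least `k` such that the vertices can be colored with `k`
colors with every color class acyclic. -/
noncomputable def dichromatic {V : Type*} (A : V → V → Prop) : ℕ :=
  sInf {k | ∃ c : V → Fin k, ∀ i, AcyclicSet A (c ⁻¹' {i})}

/-- The maximum size of an acyclic set of vertices. -/
noncomputable def maxAcyclic {V : Type*} [Fintype V] (A : V → V → Prop) : ℕ :=
  sSup {k | ∃ S : Finset V, AcyclicSet A ↑S ∧ S.card = k}

/-- Degeneracy lemma: in an oriented graph with circumference at most `s`, every
nonempty finite vertex set contains a vertex with at most `s - 2` out-neighbors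
inside the set. -/
lemma exists_small_outdeg {V : Type*} [DecidableEq V] (A : V → V → Prop)
    (hA : ∀ u v, A u v → ¬ A v u) (s : ℕ) (hs : 3 ≤ s)
    (hcyc : ∀ (n : ℕ) (f : ZMod n → V), IsDicycle A n f → n ≤ s)
    (S : Finset V) (hS : S.Nonempty) :
    ∃ v ∈ S, ∃ T : Finset V, (∀ w, w ∈ T ↔ w ∈ S ∧ A v w) ∧ T.card ≤ s - 2 := by
  classical
  by_contra hcon
  push_neg at hcon
  have hbig : ∀ v ∈ S, s - 1 ≤ (S.filter (fun w => A v w)).card := by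
    intro v hv
    have := hcon v hv (S.filter (fun w => A v w))
      (by intro w; simp [Finset.mem_filter])
    omega
  -- longest path
  set Q : ℕ → Prop := fun k => ∃ l : List V,
    l.Nodup ∧ (∀ x ∈ l, x ∈ S) ∧ l.Chain' A ∧ l.length = k with hQdef
  obtain ⟨v0, hv0⟩ := hS
  have hQ1 : Q 1 := ⟨[v0], by simp [hv0]; exact List.isChain_singleton v0⟩
  have hbound : ∀ k, Q k → k ≤ S.card := by
    rintro k ⟨l, hnd, hmem, -, rfl⟩
    calc l.length = l.toFinset.card := (List.toFinset_card_of_nodup hnd).symm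
    _ ≤ S.card := Finset.card_le_card (fun x hx => hmem x (List.mem_toFinset.mp hx))
  set g := Nat.findGreatest Q S.card with hg
  have hQg : Q g := Nat.findGreatest_spec (hbound 1 hQ1) hQ1
  obtain ⟨l, hnd, hmem, hch, hlen⟩ := hQg
  have hmax : ∀ l' : List V, l'.Nodup → (∀ x ∈ l', x ∈ S) → l'.Chain' A →
      l'.length ≤ g := by
    intro l' h1 h2 h3
    by_contra h
    push_neg at h
    exact Nat.findGreatest_is_greatest h (hbound _ ⟨l', h1, h2, h3, rfl⟩)
      ⟨l', h1, h2, h3, rfl⟩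
  have hg1 : 1 ≤ g := Nat.le_findGreatest (hbound 1 hQ1) hQ1
  have hlne : l ≠ [] := by
    intro h
    rw [h] at hlen
    simp at hlen
    omega
  set v := l.getLast hlne with hv
  have hvl : v ∈ l := List.getLast_mem hlne
  have hvS : v ∈ S := hmem v hvl
  -- helper lemmas about gets
  have geq : ∀ (a b : ℕ) (ha : a < l.length) (hb : b < l.length), a = b →
      l.get ⟨a, ha⟩ = l.get ⟨b, hb⟩ := by
    intro a b ha hb h
    subst h
    rfl
  have key : ∀ (a b : ℕ) (ha : a < l.length) (hb : b < l.length),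
      l.get ⟨a, ha⟩ = l.get ⟨b, hb⟩ → a = b := by
    intro a b ha hb h
    exact congrArg Fin.val ((hnd.get_inj_iff).mp h)
  have hchain : ∀ i (h : i < l.length - 1), A (l.get ⟨i, by omega⟩) (l.get ⟨i + 1, by omega⟩) :=
    fun i h => List.isChain_iff_getElem.mp hch i (by omega)
  -- all out-neighbors of v in S lie on the path
  have hout : ∀ w ∈ S, A v w → w ∈ l := by
    intro w hw haw
    by_contra hwl
    have hnd' : (l ++ [w]).Nodup := by
      rw [List.nodup_append]
      refine ⟨hnd, List.nodup_singleton w, ?_⟩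
      intro a ha b hb hab
      simp at hb
      subst hb
      exact hwl (hab ▸ ha)
    have hch' : (l ++ [w]).Chain' A := by
      rw [show (l ++ [w]).Chain' A ↔ List.IsChain A (l ++ [w]) from Iff.rfl, List.isChain_append]
      refine ⟨hch, List.isChain_singleton w, ?_⟩
      intro x hx y hy
      rw [List.getLast?_eq_getLast hlne] at hx
      simp at hx hy
      subst hx
      subst hy
      exact haw
    have hmem' : ∀ x ∈ l ++ [w], x ∈ S := by
      intro x hx
      rcases List.mem_append.mp hx with h | h
      · exact hmem x h
      · simp at h
        subst h
        exact hw
    have := hmax (l ++ [w]) hnd' hmem' hch'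
    simp [hlen] at this
  set T := S.filter (fun w => A v w) with hT
  have hTcard : s - 1 ≤ T.card := hbig v hvS
  have hvT : v ∉ T := fun h => hA v v (Finset.mem_filter.mp h).2 (Finset.mem_filter.mp h).2
  have hTl : ∀ w ∈ T, w ∈ l :=
    fun w hw => hout w (Finset.mem_filter.mp hw).1 (Finset.mem_filter.mp hw).2
  have hTne : T.Nonempty := Finset.card_pos.mp (by omega)
  set j := (T.image (fun w => List.idxOf w l)).min' (hTne.image _) with hj
  obtain ⟨w0, hw0T, hw0⟩ : ∃ w0 ∈ T, List.idxOf w0 l = j := by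
    have := (T.image (fun w => List.idxOf w l)).min'_mem (hTne.image _)
    simpa using (Finset.mem_image.mp this)
  have hjle : ∀ w ∈ T, j ≤ List.idxOf w l :=
    fun w hw => Finset.min'_le _ _ (Finset.mem_image_of_mem _ hw)
  have hjlt : j < l.length := by
    rw [← hw0]
    exact List.idxOf_lt_length_iff.mpr (hTl w0 hw0T)
  have hvlt : List.idxOf v l < l.length := List.idxOf_lt_length_iff.mpr hvl
  have hvidx : List.idxOf v l = l.length - 1 := by
    apply key _ _ hvlt (by omega)
    rw [List.idxOf_get hvlt]
    exact (List.getLast_eq_getElem hlne)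
  set n := l.length - j with hn
  have hcard1 : ∀ (U : Finset V), (∀ w ∈ U, w ∈ l) →
      (∀ w ∈ U, j ≤ List.idxOf w l) → U.card ≤ n := by
    intro U h1 h2
    have hle : U.card ≤ (Finset.Ico j l.length).card := by
      apply Finset.card_le_card_of_injOn (fun w => List.idxOf w l)
      · intro w hw
        exact Finset.mem_Ico.mpr ⟨h2 w hw, List.idxOf_lt_length_iff.mpr (h1 w hw)⟩
      · intro w1 hw1 w2 hw2 heq
        have e1 := List.idxOf_get (List.idxOf_lt_length_iff.mpr (h1 w1 hw1))
        have e2 := List.idxOf_get (List.idxOf_lt_length_iff.mpr (h1 w2 hw2))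
        rw [← e1, ← e2]
        exact geq _ _ _ _ heq
    simpa [Nat.card_Ico] using hle
  have hjv : j ≤ List.idxOf v l := by omega
  have hns : s ≤ n := by
    have hmemU : ∀ w ∈ insert v T, w ∈ l := by
      intro w hw
      rcases Finset.mem_insert.mp hw with rfl | hw
      · exact hvl
      · exact hTl w hw
    have hidxU : ∀ w ∈ insert v T, j ≤ List.idxOf w l := by
      intro w hw
      rcases Finset.mem_insert.mp hw with rfl | hw
      · exact hjv
      · exact hjle w hw
    have := hcard1 (insert v T) hmemU hidxU
    rw [Finset.card_insert_of_notMem hvT] at this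
    omega
  have hllen : 3 ≤ l.length := by omega
  have hx2 : l.length - 2 < l.length := by omega
  set x := l.get ⟨l.length - 2, hx2⟩ with hx
  have hxl : x ∈ l := List.get_mem l ⟨_, hx2⟩
  have hxS : x ∈ S := hmem x hxl
  have hxv : x ≠ v := by
    intro h
    have h2 : l.get ⟨l.length - 1, by omega⟩ = v := (List.getLast_eq_getElem hlne).symm
    have := key _ _ hx2 (by omega) (h.trans h2.symm)
    omega
  have hAxv : A x v := by
    have harc := hchain (l.length - 2) (by omega)
    have e1 : l.get ⟨l.length - 2 + 1, by omega⟩ = v := by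
      rw [geq _ (l.length - 1) _ (by omega) (by omega)]
      exact (List.getLast_eq_getElem hlne).symm
    rw [e1] at harc
    exact harc
  by_cases hxT : x ∈ T
  · exact hA v x (Finset.mem_filter.mp hxT).2 hAxv
  · -- build a cycle of length n ≥ s + 1, contradiction
    have hxlt : List.idxOf x l < l.length := List.idxOf_lt_length_iff.mpr hxl
    have hxidx : List.idxOf x l = l.length - 2 := by
      apply key _ _ hxlt hx2
      rw [List.idxOf_get hxlt]
    have hsn : s + 1 ≤ n := by
      have hxvT : x ∉ insert v T := by
        simp only [Finset.mem_insert]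
        rintro (h | h)
        · exact hxv h
        · exact hxT h
      have hmemU : ∀ w ∈ insert x (insert v T), w ∈ l := by
        intro w hw
        rcases Finset.mem_insert.mp hw with rfl | hw
        · exact hxl
        rcases Finset.mem_insert.mp hw with rfl | hw
        · exact hvl
        · exact hTl w hw
      have hidxU : ∀ w ∈ insert x (insert v T), j ≤ List.idxOf w l := by
        intro w hw
        rcases Finset.mem_insert.mp hw with rfl | hw
        · omega
        rcases Finset.mem_insert.mp hw with rfl | hw
        · exact hjv
        · exact hjle w hw
      have hc := hcard1 _ hmemU hidxU
      rw [Finset.card_insert_of_notMem hxvT, Finset.card_insert_of_notMem hvT] at hc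
      omega
    haveI : NeZero n := ⟨by omega⟩
    set f : ZMod n → V := fun i => l.get ⟨j + i.val, by have := ZMod.val_lt i; omega⟩
      with hf
    have fget : ∀ (i : ZMod n) (b : ℕ) (hb : b < l.length), j + i.val = b →
        f i = l.get ⟨b, hb⟩ := by
      intro i b hb h
      rw [hf]
      exact geq _ _ _ _ h
    have hdic : IsDicycle A n f := by
      refine ⟨by omega, ?_, ?_⟩
      · intro a b hab
        rw [hf] at hab
        have := key _ _ _ _ hab
        have hv : a.val = b.val := by omega
        exact ZMod.val_injective n hv
      · intro i
        haveI : Fact (1 < n) := ⟨by omega⟩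
        have hv1 : (1 : ZMod n).val = 1 := ZMod.val_one n
        have hadd : (i + 1).val = (i.val + 1) % n := by rw [ZMod.val_add, hv1]
        have hivlt := ZMod.val_lt i
        by_cases hc : i.val + 1 < n
        · have h1 : (i + 1).val = i.val + 1 := by rw [hadd, Nat.mod_eq_of_lt hc]
          have e1 : f i = l.get ⟨j + i.val, by omega⟩ := fget i _ _ rfl
          have e2 : f (i + 1) = l.get ⟨j + i.val + 1, by omega⟩ := fget (i + 1) _ _ (by omega)
          rw [e1, e2]
          have harc := hchain (j + i.val) (by omega)
          exact harc
        · have hieq : i.val = n - 1 := by omega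
          have h1 : (i + 1).val = 0 := by
            rw [hadd, hieq]
            have : n - 1 + 1 = n := by omega
            rw [this, Nat.mod_self]
          have e1 : f i = l.get ⟨l.length - 1, by omega⟩ := fget i _ _ (by omega)
          have e2 : f (i + 1) = l.get ⟨j, hjlt⟩ := fget (i + 1) _ _ (by omega)
          have hgv : l.get ⟨l.length - 1, by omega⟩ = v := (List.getLast_eq_getElem hlne).symm
          have hgw0 : l.get ⟨j, hjlt⟩ = w0 := by
            have hlt : List.idxOf w0 l < l.length := List.idxOf_lt_length_iff.mpr (hTl w0 hw0T)
            rw [geq j (List.idxOf w0 l) hjlt hlt hw0.symm]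
            exact List.idxOf_get hlt
          rw [e1, e2, hgv, hgw0]
          exact (Finset.mem_filter.mp hw0T).2
    have := hcyc n f hdic
    omega

/-- Greedy list coloring from the degeneracy lemma. -/
lemma color_exists {V : Type*} [DecidableEq V] (A : V → V → Prop)
    (hA : ∀ u v, A u v → ¬ A v u) (s : ℕ) (hs : 3 ≤ s)
    (hcyc : ∀ (n : ℕ) (f : ZMod n → V), IsDicycle A n f → n ≤ s)
    (L : V → Finset ℕ) (hL : ∀ v, s - 1 ≤ (L v).card) :
    ∀ S : Finset V, ∃ c : V → ℕ, (∀ v ∈ S, c v ∈ L v) ∧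
      ∀ (n : ℕ) (f : ZMod n → V), (∀ i, f i ∈ S) → IsDicycle A n f →
        ∃ i jj, c (f i) ≠ c (f jj) := by
  intro S
  induction S using Finset.strongInduction with
  | _ S ih =>
    rcases S.eq_empty_or_nonempty with rfl | hS
    · refine ⟨fun _ => 0, by simp, ?_⟩
      intro n f hf hd
      exact absurd (hf 0) (by simp)
    · obtain ⟨v, hvS, T, hTc, hTcard⟩ := exists_small_outdeg A hA s hs hcyc S hS
      obtain ⟨c0, hc0L, hc0⟩ := ih (S.erase v) (Finset.erase_ssubset hvS)
      have himg : (T.image c0).card ≤ s - 2 := le_trans Finset.card_image_le hTcard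
      have hne : (L v \ T.image c0).Nonempty := by
        apply Finset.card_pos.mp
        have h1 := Finset.le_card_sdiff (T.image c0) (L v)
        have h2 := hL v
        omega
      obtain ⟨α, hα⟩ := hne
      have hαL : α ∈ L v := (Finset.mem_sdiff.mp hα).1
      have hαT : α ∉ T.image c0 := (Finset.mem_sdiff.mp hα).2
      refine ⟨Function.update c0 v α, ?_, ?_⟩
      · intro u hu
        by_cases h : u = v
        · subst h
          simpa using hαL
        · rw [Function.update_of_ne h]
          exact hc0L u (Finset.mem_erase.mpr ⟨h, hu⟩)
      · intro n f hf hd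
        by_cases hex : ∃ i, f i = v
        · obtain ⟨i0, hi0⟩ := hex
          have harc : A v (f (i0 + 1)) := by
            rw [← hi0]
            exact hd.2.2 i0
          have hwv : f (i0 + 1) ≠ v := by
            intro h
            rw [h] at harc
            exact hA v v harc harc
          have hwT : f (i0 + 1) ∈ T := (hTc _).mpr ⟨hf (i0 + 1), harc⟩
          refine ⟨i0, i0 + 1, ?_⟩
          rw [hi0, Function.update_self, Function.update_of_ne hwv]
          intro h
          exact hαT (Finset.mem_image.mpr ⟨f (i0 + 1), hwT, h.symm⟩)
        · push_neg at hex
          obtain ⟨i, jj, hij⟩ := hc0 n f (fun i => Finset.mem_erase.mpr ⟨hex i, hf i⟩) hd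
          exact ⟨i, jj, by rwa [Function.update_of_ne (hex i), Function.update_of_ne (hex jj)]⟩

/-- If `D` is an oriented graph (no loops, digons or parallel arcs) whose
longest directed cycle has length `s ≥ 3`, then the list dichromatic number of `D` is at
most `s - 1`. -/
theorem stmt3 {V : Type*} [Fintype V] (A : V → V → Prop)
    (hA : ∀ u v, A u v → ¬ A v u) (s : ℕ) (hs : 3 ≤ s)
    (hex : ∃ f : ZMod s → V, IsDicycle A s f)
    (hcyc : ∀ (n : ℕ) (f : ZMod n → V), IsDicycle A n f → n ≤ s)
    (L : V → Finset ℕ) (hL : ∀ v, s - 1 ≤ (L v).card) :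
    ∃ c : V → ℕ, (∀ v, c v ∈ L v) ∧ ∀ col : ℕ, AcyclicSet A (c ⁻¹' {col}) := by
  classical
  obtain ⟨c, hc1, hc2⟩ := color_exists A hA s hs hcyc L hL Finset.univ
  refine ⟨c, fun v => hc1 v (Finset.mem_univ v), ?_⟩
  intro col n f hf hd
  obtain ⟨i, jj, hij⟩ := hc2 n f (fun i => Finset.mem_univ _) hd
  have h1 : c (f i) = col := hf i
  have h2 : c (f jj) = col := hf jj
  exact hij (h1.trans h2.symm)
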